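/- Conservativity: Let G₁ be a coherent canonical system in language L₁, and let G₂ be a coherent canonical system in an extension L₂ of L₁ obtained from G₁ by adding canonical rules only for connectives in L₂ \ L₁. Then G₂ is a conservative extension of G₁: for any set of sequents S ∪ {s} all in the language L₁, s is derivable from S in G₁ if and only if s is derivable from S in G₂. -/

import Mathlib

/-- A propositional language: a type of connectives with arities. -/
structure Lang where
  Conn : Type
  arity : Conn → ℕ

/-- Formulas over a language, with atoms indexed by ℕ. -/
inductive Fm (L : Lang) : Type
  | atom : ℕ → Fm L
  | conn : (c : L.Conn) → (Fin (L.arity c) → Fm L) → Fm L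

/-- The substitution determined by its values on atoms. -/
def Fm.subst {L : Lang} (σ : ℕ → Fm L) : Fm L → Fm L
  | .atom n => σ n
  | .conn c f => .conn c (fun i => (f i).subst σ)

/-- A non-strict single-conclusion sequent Γ ⇒ E. -/
structure Sequent (L : Lang) where
  left : Set (Fm L)
  right : Option (Fm L)

/-- A Horn clause over atoms p₁,…,pₙ (represented by `Fin n`). -/
structure Clause (n : ℕ) where
  lhs : Set (Fin n)
  rhs : Option (Fin n)

/-- A canonical right-introduction rule for a connective. -/
structure RightRule (L : Lang) where
  conn : L.Conn
  prem : Set (Clause (L.arity conn))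

/-- A canonical left-introduction rule, with hard and soft premises. -/
structure LeftRule (L : Lang) where
  conn : L.Conn
  hard : Set (Clause (L.arity conn))
  soft : Set (Set (Fin (L.arity conn)))

/-- A canonical system: a collection of canonical rules. -/
structure CanSys (L : Lang) where
  rights : Set (RightRule L)
  lefts : Set (LeftRule L)

/-- The sequent obtained by instantiating a clause with a substitution. -/
def Clause.seq {L : Lang} {n : ℕ} (σ : Fin n → Fm L) (c : Clause n) : Sequent L :=
  ⟨σ '' c.lhs, c.rhs.map σ⟩

/-- Derivability in a canonical system `G` from assumptions `S`,
where all cut formulas must belong to `C`. -/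
inductive Deriv {L : Lang} (G : CanSys L) (S : Set (Sequent L)) (C : Set (Fm L)) :
    Sequent L → Prop
  | hyp {s : Sequent L} : s ∈ S → Deriv G S C s
  | ax (φ : Fm L) : Deriv G S C ⟨{φ}, some φ⟩
  | weakL {Γ Γ' : Set (Fm L)} {E : Option (Fm L)} :
      Deriv G S C ⟨Γ, E⟩ → Γ ⊆ Γ' → Deriv G S C ⟨Γ', E⟩
  | weakR {Γ : Set (Fm L)} (ψ : Fm L) :
      Deriv G S C ⟨Γ, none⟩ → Deriv G S C ⟨Γ, some ψ⟩
  | cut {Γ Δ : Set (Fm L)} {φ : Fm L} {E : Option (Fm L)} :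
      φ ∈ C → Deriv G S C ⟨Γ, some φ⟩ → Deriv G S C ⟨insert φ Δ, E⟩ →
      Deriv G S C ⟨Γ ∪ Δ, E⟩
  | right {Γ : Set (Fm L)} (rr : RightRule L) (hr : rr ∈ G.rights)
      (σ : Fin (L.arity rr.conn) → Fm L) :
      (∀ c ∈ rr.prem, Deriv G S C ⟨Γ ∪ σ '' c.lhs, c.rhs.map σ⟩) →
      Deriv G S C ⟨Γ, some (Fm.conn rr.conn σ)⟩
  | left {Γ : Set (Fm L)} {E : Option (Fm L)} (lr : LeftRule L) (hl : lr ∈ G.lefts)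
      (σ : Fin (L.arity lr.conn) → Fm L) :
      (∀ c ∈ lr.hard, Deriv G S C ⟨Γ ∪ σ '' c.lhs, c.rhs.map σ⟩) →
      (∀ t ∈ lr.soft, Deriv G S C ⟨Γ ∪ σ '' t, E⟩) →
      Deriv G S C ⟨insert (Fm.conn lr.conn σ) Γ, E⟩

/-- The set of formulas occurring in some sequent of `S`. -/
def cutFms {L : Lang} (S : Set (Sequent L)) : Set (Fm L) :=
  {φ | ∃ s ∈ S, φ ∈ s.left ∨ s.right = some φ}

/-- Classical satisfaction of a Horn clause by a two-valued assignment. -/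
def Clause.sat {n : ℕ} (v : Fin n → Bool) (c : Clause n) : Prop :=
  (∃ p ∈ c.lhs, v p = false) ∨ (∃ q, c.rhs = some q ∧ v q = true)

/-- Joint classical satisfiability of the premises of a left rule and a right rule. -/
def JointSat {L : Lang} (lr : LeftRule L) (rr : RightRule L)
    (h : L.arity lr.conn = L.arity rr.conn) : Prop :=
  ∃ v : Fin (L.arity lr.conn) → Bool,
    (∀ c ∈ lr.hard, c.sat v) ∧
    (∀ t ∈ lr.soft, ∃ p ∈ t, v p = false) ∧
    (∀ c ∈ rr.prem, c.sat (fun i => v (Fin.cast h.symm i)))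

/-- Coherence: matching left/right rule pairs have jointly unsatisfiable premises. -/
def Coherent {L : Lang} (G : CanSys L) : Prop :=
  ∀ lr ∈ G.lefts, ∀ rr ∈ G.rights, ∀ h : lr.conn = rr.conn,
    ¬ JointSat lr rr (congrArg L.arity h)

section Semantics

variable {L : Lang} {W : Type}

/-- A sequent is locally true at a world. -/
def locT (v : W → Fm L → Bool) (a : W) (s : Sequent L) : Prop :=
  (∃ ψ ∈ s.left, v a ψ = false) ∨ (∃ φ, s.right = some φ ∧ v a φ = true)

/-- A sequent is (absolutely) true at a world: locally true at all successors. -/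
def absT (le : W → W → Prop) (v : W → Fm L → Bool) (a : W) (s : Sequent L) : Prop :=
  ∀ b, le a b → locT v b s

/-- Persistence of a valuation. -/
def PersistentU (le : W → W → Prop) (v : W → Fm L → Bool) : Prop :=
  ∀ (φ : Fm L) (a b : W), le a b → v a φ = true → v b φ = true

/-- A valuation respects a right-introduction rule. -/
def RespR (le : W → W → Prop) (v : W → Fm L → Bool) (rr : RightRule L) : Prop :=
  ∀ (a : W) (σ : Fin (L.arity rr.conn) → Fm L),
    (∀ c ∈ rr.prem, absT le v a (c.seq σ)) → v a (Fm.conn rr.conn σ) = true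

/-- A valuation respects a left-introduction rule. -/
def RespL (le : W → W → Prop) (v : W → Fm L → Bool) (lr : LeftRule L) : Prop :=
  ∀ (a : W) (σ : Fin (L.arity lr.conn) → Fm L),
    (∀ c ∈ lr.hard, absT le v a (c.seq σ)) →
    (∀ t ∈ lr.soft, locT v a ⟨σ '' t, (none : Option (Fm L))⟩) →
    v a (Fm.conn lr.conn σ) = false

/-- A valuation is G-legal: it respects all rules of G. -/
def LegalU (G : CanSys L) (le : W → W → Prop) (v : W → Fm L → Bool) : Prop :=
  (∀ rr ∈ G.rights, RespR le v rr) ∧ (∀ lr ∈ G.lefts, RespL le v lr)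

end Semantics

/-- Semantic consequence: every G-legal frame which is a model of S is a model of s. -/
def SemConseq {L : Lang} (G : CanSys L) (S : Set (Sequent L)) (s : Sequent L) : Prop :=
  ∀ (W : Type) (le : W → W → Prop),
    (∀ a, le a a) → (∀ a b c, le a b → le b c → le a c) →
    (∀ a b, le a b → le b a → a = b) → Nonempty W →
    ∀ v : W → Fm L → Bool, PersistentU le v → LegalU G le v →
      (∀ t ∈ S, ∀ a, locT v a t) → (∀ a, locT v a s)

/-- A formula lies in the sublanguage generated by the connectives in K. -/
def Fm.inK {L : Lang} (K : Set L.Conn) : Fm L → Prop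
  | .atom _ => True
  | .conn c f => c ∈ K ∧ ∀ i, (f i).inK K

/-- A sequent lies in the sublanguage generated by K. -/
def Sequent.inK {L : Lang} (K : Set L.Conn) (s : Sequent L) : Prop :=
  (∀ φ ∈ s.left, φ.inK K) ∧ (∀ φ : Fm L, s.right = some φ → φ.inK K)


namespace ConsAux

variable {L : Lang}

/-- Derivability in `G1` from `S` with unrestricted cuts. -/
def Der (G1 : CanSys L) (S : Set (Sequent L)) (Γ : Set (Fm L)) (E : Option (Fm L)) : Prop :=
  Deriv G1 S Set.univ ⟨Γ, E⟩

theorem Der.mono {G1 : CanSys L} {S : Set (Sequent L)} {Γ Γ' : Set (Fm L)} {E : Option (Fm L)}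
    (h : Der G1 S Γ E) (hs : Γ ⊆ Γ') : Der G1 S Γ' E :=
  Deriv.weakL h hs

/-- Phase-style closure operator. -/
def star (G1 : CanSys L) (S : Set (Sequent L)) (B : Set (Set (Fm L))) : Set (Set (Fm L)) :=
  {Δ | ∀ Θ F, (∀ Δ' ∈ B, Der G1 S (Δ' ∪ Θ) F) → Der G1 S (Δ ∪ Θ) F}

theorem subset_star {G1 : CanSys L} {S : Set (Sequent L)} {B : Set (Set (Fm L))} :
    B ⊆ star G1 S B :=
  fun _ hΔ _ _ orth => orth _ hΔ

theorem star_up {G1 : CanSys L} {S : Set (Sequent L)} {B : Set (Set (Fm L))}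
    {Δ Δ' : Set (Fm L)} (h : Δ ∈ star G1 S B) (hs : Δ ⊆ Δ') : Δ' ∈ star G1 S B :=
  fun Θ F orth => (h Θ F orth).mono (Set.union_subset_union_left _ hs)

theorem star_cut {G1 : CanSys L} {S : Set (Sequent L)} {B : Set (Set (Fm L))}
    {Ξ Ξ₂ : Set (Fm L)} {ψ : Fm L}
    (h : Ξ ∪ {ψ} ∈ star G1 S B) (hd : Der G1 S Ξ₂ (some ψ)) : Ξ ∪ Ξ₂ ∈ star G1 S B := by
  intro Θ F orth
  have h1 : Der G1 S (insert ψ (Ξ ∪ Θ)) F :=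
    (h Θ F orth).mono (by
      intro x hx
      simp only [Set.mem_union, Set.mem_singleton_iff, Set.mem_insert_iff] at *
      tauto)
  have h2 := Deriv.cut (Set.mem_univ ψ) hd h1
  exact Der.mono h2 (by intro x hx; simp only [Set.mem_union] at *; tauto)

theorem star_of_none {G1 : CanSys L} {S : Set (Sequent L)} {B : Set (Set (Fm L))}
    {Δ : Set (Fm L)} (h : Der G1 S Δ none) : Δ ∈ star G1 S B := by
  intro Θ F orth
  have h1 : Der G1 S (Δ ∪ Θ) none := h.mono Set.subset_union_left
  cases F with
  | none => exact h1
  | some ψ => exact Deriv.weakR ψ h1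

/-- Support of a formula by a context, relative to an interpretation `I` of the formula. -/
def SupA (K : Set L.Conn) (I : Set (Set (Fm L))) (φ : Fm L) (Δ : Set (Fm L)) : Prop :=
  (φ.inK K → φ ∈ Δ) ∧ (¬ φ.inK K → Δ ∈ I)

/-- Right-hand judgment, relative to an interpretation `I` of the formula. -/
def JA (G1 : CanSys L) (S : Set (Sequent L)) (K : Set L.Conn) (I : Set (Set (Fm L)))
    (φ : Fm L) (Δ : Set (Fm L)) : Prop :=
  (φ.inK K → Der G1 S Δ (some φ)) ∧ (¬ φ.inK K → Δ ∈ I)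

/-- The "supports a right rule" set used in the interpretation of connective formulas. -/
def WsetA (G1 : CanSys L) (S : Set (Sequent L)) (K : Set L.Conn) {m : ℕ}
    (g : Fin m → Fm L) (Ig : Fin m → Set (Set (Fm L))) (prem : Set (Clause m)) :
    Set (Set (Fm L)) :=
  {Ξ | ∀ cl ∈ prem, ∀ Ξ', Ξ ⊆ Ξ' → (∀ p ∈ cl.lhs, SupA K (Ig p) (g p) Ξ') →
    Option.elim cl.rhs (Der G1 S Ξ' none) (fun q => JA G1 S K (Ig q) (g q) Ξ')}

/-- Phase-style interpretation of formulas. -/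
noncomputable def interp (G1 : CanSys L) (S : Set (Sequent L)) (G2 : CanSys L)
    (K : Set L.Conn) : Fm L → Set (Set (Fm L)) :=
  Fm.rec (motive := fun _ => Set (Set (Fm L))) (fun _ => star G1 S ∅)
    (fun c f ih => star G1 S
      (⋃ (rr : RightRule L) (_ : rr ∈ G2.rights) (e : rr.conn = c),
        WsetA G1 S K (fun p => f (Fin.cast (congrArg L.arity e) p))
          (fun p => ih (Fin.cast (congrArg L.arity e) p)) rr.prem))

theorem interp_conn (G1 : CanSys L) (S : Set (Sequent L)) (G2 : CanSys L) (K : Set L.Conn)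
    (c : L.Conn) (f : Fin (L.arity c) → Fm L) :
    interp G1 S G2 K (Fm.conn c f) = star G1 S
      (⋃ (rr : RightRule L) (_ : rr ∈ G2.rights) (e : rr.conn = c),
        WsetA G1 S K (fun p => f (Fin.cast (congrArg L.arity e) p))
          (fun p => interp G1 S G2 K (f (Fin.cast (congrArg L.arity e) p))) rr.prem) := rfl

theorem interp_isStar (G1 : CanSys L) (S : Set (Sequent L)) (G2 : CanSys L) (K : Set L.Conn)
    (φ : Fm L) : ∃ B, interp G1 S G2 K φ = star G1 S B := by
  cases φ with
  | atom n => exact ⟨_, rfl⟩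
  | conn c f => exact ⟨_, rfl⟩

/-- Support of a formula by a context. -/
def Sup (G1 : CanSys L) (S : Set (Sequent L)) (G2 : CanSys L) (K : Set L.Conn)
    (Δ : Set (Fm L)) (φ : Fm L) : Prop :=
  SupA K (interp G1 S G2 K φ) φ Δ

/-- Right-hand judgment for an optional formula. -/
def J (G1 : CanSys L) (S : Set (Sequent L)) (G2 : CanSys L) (K : Set L.Conn)
    (Δ : Set (Fm L)) : Option (Fm L) → Prop
  | none => Der G1 S Δ none
  | some φ => JA G1 S K (interp G1 S G2 K φ) φ Δ

/-- Semantic truth of a sequent in the phase model. -/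
def Tru (G1 : CanSys L) (S : Set (Sequent L)) (G2 : CanSys L) (K : Set L.Conn)
    (t : Sequent L) : Prop :=
  ∀ Δ : Set (Fm L), (∀ φ ∈ t.left, Sup G1 S G2 K Δ φ) → J G1 S G2 K Δ t.right

section Lemmas

variable {G1 G2 : CanSys L} {S : Set (Sequent L)} {K : Set L.Conn}

theorem J_up {Δ Δ' : Set (Fm L)} {E : Option (Fm L)}
    (h : J G1 S G2 K Δ E) (hs : Δ ⊆ Δ') : J G1 S G2 K Δ' E := by
  cases E with
  | none => exact Der.mono h hs
  | some φ =>
    obtain ⟨B, hB⟩ := interp_isStar G1 S G2 K φ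
    exact ⟨fun hp => (h.1 hp).mono hs,
      fun hi => by rw [hB]; exact star_up (hB ▸ h.2 hi) hs⟩

theorem Sup_up {Δ Δ' : Set (Fm L)} {φ : Fm L}
    (h : Sup G1 S G2 K Δ φ) (hs : Δ ⊆ Δ') : Sup G1 S G2 K Δ' φ := by
  obtain ⟨B, hB⟩ := interp_isStar G1 S G2 K φ
  exact ⟨fun hp => hs (h.1 hp), fun hi => by rw [hB]; exact star_up (hB ▸ h.2 hi) hs⟩

theorem J_of_pure {Δ : Set (Fm L)} {φ : Fm L} (hp : φ.inK K)
    (hd : Der G1 S Δ (some φ)) : J G1 S G2 K Δ (some φ) :=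
  ⟨fun _ => hd, fun hi => absurd hp hi⟩

theorem J_none_any {Δ : Set (Fm L)} {E : Option (Fm L)}
    (h : Der G1 S Δ none) : J G1 S G2 K Δ E := by
  cases E with
  | none => exact h
  | some φ =>
    obtain ⟨B, hB⟩ := interp_isStar G1 S G2 K φ
    exact ⟨fun _ => Deriv.weakR φ h, fun _ => by rw [hB]; exact star_of_none h⟩

theorem J_cut {Ξ Ξ₂ : Set (Fm L)} {ψ : Fm L} {E : Option (Fm L)}
    (h : J G1 S G2 K (Ξ ∪ {ψ}) E) (hd : Der G1 S Ξ₂ (some ψ)) :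
    J G1 S G2 K (Ξ ∪ Ξ₂) E := by
  cases E with
  | none =>
    have h1 : Der G1 S (insert ψ Ξ) none := by rwa [Set.union_singleton] at h
    exact Der.mono (Deriv.cut (Set.mem_univ ψ) hd h1)
      (by intro x hx; simp only [Set.mem_union] at *; tauto)
  | some φ =>
    constructor
    · intro hp
      have h1 : Der G1 S (insert ψ Ξ) (some φ) := by
        have := h.1 hp; rwa [Set.union_singleton] at this
      exact Der.mono (Deriv.cut (Set.mem_univ ψ) hd h1)
        (by intro x hx; simp only [Set.mem_union] at *; tauto)
    · intro hi
      obtain ⟨B, hB⟩ := interp_isStar G1 S G2 K φ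
      rw [hB]; exact star_cut (hB ▸ h.2 hi) hd

theorem J_multicut {Ξ₀ : Set (Fm L)} {E : Option (Fm L)} {Φ : Set (Fm L)} (hfin : Φ.Finite)
    (hall : ∀ ψ ∈ Φ, Der G1 S Ξ₀ (some ψ)) (h : J G1 S G2 K (Ξ₀ ∪ Φ) E) :
    J G1 S G2 K Ξ₀ E := by
  refine Set.Finite.induction_on (motive := fun Φ _ => (∀ ψ ∈ Φ, Der G1 S Ξ₀ (some ψ)) → J G1 S G2 K (Ξ₀ ∪ Φ) E →
      J G1 S G2 K Ξ₀ E) Φ hfin ?_ ?_ hall h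
  · intro _ h0; rwa [Set.union_empty] at h0
  · intro a Φ' _ _ ih hall' h'
    apply ih (fun ψ hψ => hall' ψ (Set.mem_insert_of_mem _ hψ))
    have hda : Der G1 S Ξ₀ (some a) := hall' a (Set.mem_insert _ _)
    have hset : Ξ₀ ∪ insert a Φ' = (Ξ₀ ∪ Φ') ∪ {a} := by
      ext x
      simp only [Set.mem_union, Set.mem_insert_iff, Set.mem_singleton_iff]
      tauto
    rw [hset] at h'
    have h2 := J_cut h' hda
    have heq : (Ξ₀ ∪ Φ') ∪ Ξ₀ = Ξ₀ ∪ Φ' := by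
      ext x; simp only [Set.mem_union]; tauto
    rwa [heq] at h2

section Propagate

variable {G1 G2 : CanSys L} {S : Set (Sequent L)} {K : Set L.Conn}

/-- The key coherence-propagation lemma: if a context supports a right rule for the
connective of a left rule of `G2`, and the premises of that left rule are true, then
the conclusion judgment holds at that context. -/
theorem propagate (hcoh2 : Coherent G2)
    (lr : LeftRule L) (hl : lr ∈ G2.lefts) (σ : Fin (L.arity lr.conn) → Fm L)
    (Γ : Set (Fm L)) (E : Option (Fm L))
    (Hhard : ∀ c ∈ lr.hard, Tru G1 S G2 K ⟨Γ ∪ σ '' c.lhs, c.rhs.map σ⟩)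
    (Hsoft : ∀ t ∈ lr.soft, Tru G1 S G2 K ⟨Γ ∪ σ '' t, E⟩)
    (rr : RightRule L) (hr : rr ∈ G2.rights) (e : rr.conn = lr.conn)
    (Ξ₀ : Set (Fm L))
    (hW : Ξ₀ ∈ WsetA G1 S K (fun p => σ (Fin.cast (congrArg L.arity e) p))
            (fun p => interp G1 S G2 K (σ (Fin.cast (congrArg L.arity e) p))) rr.prem)
    (hΓ : ∀ φ ∈ Γ, Sup G1 S G2 K Ξ₀ φ) :
    J G1 S G2 K Ξ₀ E := by
  classical
  set ce : Fin (L.arity rr.conn) → Fin (L.arity lr.conn) :=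
    Fin.cast (congrArg L.arity e) with hce
  set Cl : Set (Fin (L.arity lr.conn)) → Prop := fun M =>
    (∀ cl ∈ lr.hard, (∀ p ∈ cl.lhs, p ∈ M) → ∀ q, cl.rhs = some q → q ∈ M) ∧
    (∀ cl ∈ rr.prem, (∀ p ∈ cl.lhs, ce p ∈ M) → ∀ q, cl.rhs = some q → ce q ∈ M) with hCl
  set R : Set (Fin (L.arity lr.conn)) := ⋂₀ {M | Cl M} with hR
  have hRcl : Cl R := by
    constructor
    · intro cl hcl hlhs q hq
      refine Set.mem_sInter.mpr fun M hM => ?_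
      exact hM.1 cl hcl (fun p hp => Set.mem_sInter.mp (hlhs p hp) M hM) q hq
    · intro cl hcl hlhs q hq
      refine Set.mem_sInter.mpr fun M hM => ?_
      exact hM.2 cl hcl (fun p hp => Set.mem_sInter.mp (hlhs p hp) M hM) q hq
  -- the key claim: every propagated index is semantically available at Ξ₀
  have key : ∀ q ∈ R, J G1 S G2 K Ξ₀ (some (σ q)) := by
    have hClM : Cl {q | q ∈ R ∧ J G1 S G2 K Ξ₀ (some (σ q))} := by
      constructor
      · intro cl hcl hlhs q hq
        refine ⟨hRcl.1 cl hcl (fun p hp => (hlhs p hp).1) q hq, ?_⟩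
        have hfin : (σ '' {p | p ∈ cl.lhs ∧ (σ p).inK K}).Finite :=
          Set.Finite.image _ (Set.toFinite _)
        have hsup' : ∀ φ ∈ Γ ∪ σ '' cl.lhs,
            Sup G1 S G2 K (Ξ₀ ∪ σ '' {p | p ∈ cl.lhs ∧ (σ p).inK K}) φ := by
          intro φ hφ
          rcases hφ with hφ | hφ
          · exact Sup_up (hΓ φ hφ) Set.subset_union_left
          · obtain ⟨p, hp, rfl⟩ := hφ
            by_cases hpk : (σ p).inK K
            · exact ⟨fun _ => Set.mem_union_right _ ⟨p, ⟨hp, hpk⟩, rfl⟩,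
                fun hi => absurd hpk hi⟩
            · refine ⟨fun hpp => absurd hpp hpk, fun _ => ?_⟩
              obtain ⟨B, hB⟩ := interp_isStar G1 S G2 K (σ p)
              rw [hB]
              exact star_up (hB ▸ (hlhs p hp).2.2 hpk) Set.subset_union_left
        have hJ' := Hhard cl hcl _ hsup'
        rw [hq] at hJ'
        refine J_multicut hfin ?_ hJ'
        rintro ψ ⟨p, ⟨hp, hpk⟩, rfl⟩
        exact (hlhs p hp).2.1 hpk
      · intro cl hcl hlhs q hq
        refine ⟨hRcl.2 cl hcl (fun p hp => (hlhs p hp).1) q hq, ?_⟩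
        have hfin : ((fun p => σ (ce p)) '' {p | p ∈ cl.lhs ∧ (σ (ce p)).inK K}).Finite :=
          Set.Finite.image _ (Set.toFinite _)
        have hargs : ∀ p ∈ cl.lhs, SupA K (interp G1 S G2 K (σ (ce p))) (σ (ce p))
            (Ξ₀ ∪ (fun p => σ (ce p)) '' {p | p ∈ cl.lhs ∧ (σ (ce p)).inK K}) := by
          intro p hp
          by_cases hpk : (σ (ce p)).inK K
          · exact ⟨fun _ => Set.mem_union_right _ ⟨p, ⟨hp, hpk⟩, rfl⟩,
              fun hi => absurd hpk hi⟩
          · refine ⟨fun hpp => absurd hpp hpk, fun _ => ?_⟩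
            obtain ⟨B, hB⟩ := interp_isStar G1 S G2 K (σ (ce p))
            rw [hB]
            exact star_up (hB ▸ (hlhs p hp).2.2 hpk) Set.subset_union_left
        have hres := hW cl hcl _ Set.subset_union_left hargs
        rw [hq] at hres
        refine J_multicut hfin ?_ hres
        rintro ψ ⟨p, ⟨hp, hpk⟩, rfl⟩
        exact (hlhs p hp).2.1 hpk
    intro q hq
    exact (Set.mem_sInter.mp hq _ hClM).2
  by_cases hbot :
      (∃ cl ∈ lr.hard, cl.rhs = none ∧ ∀ p ∈ cl.lhs, p ∈ R) ∨
      (∃ cl ∈ rr.prem, cl.rhs = none ∧ ∀ p ∈ cl.lhs, ce p ∈ R)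
  · -- a ⊥-clause fires: conclude from an inconsistency
    have hnone : Der G1 S Ξ₀ none := by
      rcases hbot with ⟨cl, hcl, hrhs, hlhs⟩ | ⟨cl, hcl, hrhs, hlhs⟩
      · have hfin : (σ '' {p | p ∈ cl.lhs ∧ (σ p).inK K}).Finite :=
          Set.Finite.image _ (Set.toFinite _)
        have hsup' : ∀ φ ∈ Γ ∪ σ '' cl.lhs,
            Sup G1 S G2 K (Ξ₀ ∪ σ '' {p | p ∈ cl.lhs ∧ (σ p).inK K}) φ := by
          intro φ hφ
          rcases hφ with hφ | hφ
          · exact Sup_up (hΓ φ hφ) Set.subset_union_left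
          · obtain ⟨p, hp, rfl⟩ := hφ
            by_cases hpk : (σ p).inK K
            · exact ⟨fun _ => Set.mem_union_right _ ⟨p, ⟨hp, hpk⟩, rfl⟩,
                fun hi => absurd hpk hi⟩
            · refine ⟨fun hpp => absurd hpp hpk, fun _ => ?_⟩
              obtain ⟨B, hB⟩ := interp_isStar G1 S G2 K (σ p)
              rw [hB]
              exact star_up (hB ▸ (key p (hlhs p hp)).2 hpk) Set.subset_union_left
        have hJ' := Hhard cl hcl _ hsup'
        rw [hrhs] at hJ'
        exact J_multicut (G2 := G2) (K := K) hfin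
          (by rintro ψ ⟨p, ⟨hp, hpk⟩, rfl⟩; exact (key p (hlhs p hp)).1 hpk) hJ'
      · have hfin : ((fun p => σ (ce p)) '' {p | p ∈ cl.lhs ∧ (σ (ce p)).inK K}).Finite :=
          Set.Finite.image _ (Set.toFinite _)
        have hargs : ∀ p ∈ cl.lhs, SupA K (interp G1 S G2 K (σ (ce p))) (σ (ce p))
            (Ξ₀ ∪ (fun p => σ (ce p)) '' {p | p ∈ cl.lhs ∧ (σ (ce p)).inK K}) := by
          intro p hp
          by_cases hpk : (σ (ce p)).inK K
          · exact ⟨fun _ => Set.mem_union_right _ ⟨p, ⟨hp, hpk⟩, rfl⟩,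
              fun hi => absurd hpk hi⟩
          · refine ⟨fun hpp => absurd hpp hpk, fun _ => ?_⟩
            obtain ⟨B, hB⟩ := interp_isStar G1 S G2 K (σ (ce p))
            rw [hB]
            exact star_up (hB ▸ (key _ (hlhs p hp)).2 hpk) Set.subset_union_left
        have hres := hW cl hcl _ Set.subset_union_left hargs
        rw [hrhs] at hres
        exact J_multicut (G1 := G1) (S := S) (G2 := G2) (K := K) (E := none) hfin
          (by rintro ψ ⟨p, ⟨hp, hpk⟩, rfl⟩; exact (key _ (hlhs p hp)).1 hpk) hres
    exact J_none_any hnone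
  · -- no ⊥-clause fires: use coherence to find a soft premise fully propagated
    push_neg at hbot
    obtain ⟨hb1, hb2⟩ := hbot
    set v₀ : Fin (L.arity lr.conn) → Bool := fun p => if p ∈ R then true else false with hv
    have hvtrue : ∀ p, v₀ p = true ↔ p ∈ R := by
      intro p; by_cases h : p ∈ R <;> simp [hv, h]
    have hvfalse : ∀ p, v₀ p = false ↔ p ∉ R := by
      intro p; by_cases h : p ∈ R <;> simp [hv, h]
    have hA : ∀ cl ∈ lr.hard, cl.sat v₀ := by
      intro cl hcl
      by_cases hall : ∀ p ∈ cl.lhs, p ∈ R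
      · cases hrh : cl.rhs with
        | none =>
          obtain ⟨p, hp, hpR⟩ := hb1 cl hcl hrh
          exact absurd (hall p hp) hpR
        | some q => exact Or.inr ⟨q, hrh, (hvtrue q).mpr (hRcl.1 cl hcl hall q hrh)⟩
      · push_neg at hall
        obtain ⟨p, hp, hpR⟩ := hall
        exact Or.inl ⟨p, hp, (hvfalse p).mpr hpR⟩
    have hC : ∀ cl ∈ rr.prem,
        cl.sat (fun i => v₀ (Fin.cast (congrArg L.arity e.symm).symm i)) := by
      intro cl hcl
      by_cases hall : ∀ p ∈ cl.lhs, ce p ∈ R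
      · cases hrh : cl.rhs with
        | none =>
          obtain ⟨p, hp, hpR⟩ := hb2 cl hcl hrh
          exact absurd (hall p hp) hpR
        | some q => exact Or.inr ⟨q, hrh, (hvtrue _).mpr (hRcl.2 cl hcl hall q hrh)⟩
      · push_neg at hall
        obtain ⟨p, hp, hpR⟩ := hall
        exact Or.inl ⟨p, hp, (hvfalse _).mpr hpR⟩
    have hns := hcoh2 lr hl rr hr e.symm
    have hBneg : ¬ ∀ t ∈ lr.soft, ∃ p ∈ t, v₀ p = false := fun hBB => hns ⟨v₀, hA, hBB, hC⟩
    push_neg at hBneg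
    obtain ⟨t, ht, htR⟩ := hBneg
    have htR' : ∀ p ∈ t, p ∈ R := by
      intro p hp
      by_contra h
      exact htR p hp ((hvfalse p).mpr h)
    have hfin : (σ '' {p | p ∈ t ∧ (σ p).inK K}).Finite :=
      Set.Finite.image _ (Set.toFinite _)
    have hsup' : ∀ φ ∈ Γ ∪ σ '' t,
        Sup G1 S G2 K (Ξ₀ ∪ σ '' {p | p ∈ t ∧ (σ p).inK K}) φ := by
      intro φ hφ
      rcases hφ with hφ | hφ
      · exact Sup_up (hΓ φ hφ) Set.subset_union_left
      · obtain ⟨p, hp, rfl⟩ := hφ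
        by_cases hpk : (σ p).inK K
        · exact ⟨fun _ => Set.mem_union_right _ ⟨p, ⟨hp, hpk⟩, rfl⟩,
            fun hi => absurd hpk hi⟩
        · refine ⟨fun hpp => absurd hpp hpk, fun _ => ?_⟩
          obtain ⟨B, hB⟩ := interp_isStar G1 S G2 K (σ p)
          rw [hB]
          exact star_up (hB ▸ (key p (htR' p hp)).2 hpk) Set.subset_union_left
    have hJ' := Hsoft t ht _ hsup'
    exact J_multicut hfin
      (by rintro ψ ⟨p, ⟨hp, hpk⟩, rfl⟩; exact (key p (htR' p hp)).1 hpk) hJ'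

end Propagate

section Main

variable {G1 G2 : CanSys L} {S : Set (Sequent L)} {K : Set L.Conn}

theorem J_to_der_pure {pt : Set (Fm L)} {m : ℕ} {r : Option (Fin m)} {σ : Fin m → Fm L}
    (hσ : ∀ i, (σ i).inK K) (h : J G1 S G2 K pt (r.map σ)) : Der G1 S pt (r.map σ) := by
  cases r with
  | none => exact h
  | some q => exact h.1 (hσ q)

/-- Soundness of `G2`-derivability for the phase model built from `G1`. -/
theorem main_sound (hcoh2 : Coherent G2)
    (hnewR : ∀ rr ∈ G2.rights, rr.conn ∈ K → rr ∈ G1.rights)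
    (hnewL : ∀ lr ∈ G2.lefts, lr.conn ∈ K → lr ∈ G1.lefts)
    (hS : ∀ t ∈ S, t.inK K)
    {t : Sequent L} (h : Deriv G2 S Set.univ t) : Tru G1 S G2 K t := by
  induction h with
  | @hyp s hmem =>
    intro Δ hsup
    have hK := hS s hmem
    have hsub : s.left ⊆ Δ := fun φ hφ => (hsup φ hφ).1 (hK.1 φ hφ)
    have hd : Der G1 S Δ s.right := Der.mono (Deriv.hyp hmem) hsub
    cases hsr : s.right with
    | none => rw [hsr] at hd; exact hd
    | some φ => rw [hsr] at hd; exact J_of_pure (hK.2 φ hsr) hd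
  | ax φ =>
    intro Δ hsup
    have hφ := hsup φ rfl
    by_cases hp : φ.inK K
    · exact J_of_pure hp (Der.mono (Deriv.ax φ) (Set.singleton_subset_iff.mpr (hφ.1 hp)))
    · exact ⟨fun hpp => absurd hpp hp, fun _ => hφ.2 hp⟩
  | @weakL Γ Γ' E h hsub ih =>
    intro Δ hsup
    exact ih Δ (fun φ hφ => hsup φ (hsub hφ))
  | @weakR Γ ψ h ih =>
    intro Δ hsup
    exact J_none_any (ih Δ hsup)
  | @cut Γ Δ₀ φ E hC h1 h2 ih1 ih2 =>
    intro Δ hsup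
    have hsΓ : ∀ ψ ∈ Γ, Sup G1 S G2 K Δ ψ := fun ψ hψ => hsup ψ (Set.mem_union_left _ hψ)
    have hsΔ₀ : ∀ ψ ∈ Δ₀, Sup G1 S G2 K Δ ψ := fun ψ hψ => hsup ψ (Set.mem_union_right _ hψ)
    have jφ := ih1 Δ hsΓ
    by_cases hp : φ.inK K
    · have hd := jφ.1 hp
      have hsup2 : ∀ ψ ∈ insert φ Δ₀, Sup G1 S G2 K (Δ ∪ {φ}) ψ := by
        intro ψ hψ
        rcases Set.mem_insert_iff.mp hψ with rfl | hψ
        · exact ⟨fun _ => Set.mem_union_right _ rfl, fun hi => absurd hp hi⟩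
        · exact Sup_up (hsΔ₀ ψ hψ) Set.subset_union_left
      have h3 := ih2 _ hsup2
      have h4 := J_cut h3 hd
      rwa [Set.union_self] at h4
    · have hsupφ : Sup G1 S G2 K Δ φ := ⟨fun hpp => absurd hpp hp, fun _ => jφ.2 hp⟩
      refine ih2 Δ ?_
      intro ψ hψ
      rcases Set.mem_insert_iff.mp hψ with rfl | hψ
      · exact hsupφ
      · exact hsΔ₀ ψ hψ
  | @right Γ rr hr σ hprem ih =>
    intro Δ hsup
    by_cases hp : (Fm.conn rr.conn σ).inK K
    · have hp' : rr.conn ∈ K ∧ ∀ i, (σ i).inK K := by simpa [Fm.inK] using hp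
      refine J_of_pure hp ?_
      refine Deriv.right rr (hnewR rr hr hp'.1) σ ?_
      intro cl hcl
      have hsup' : ∀ ψ ∈ Γ ∪ σ '' cl.lhs, Sup G1 S G2 K (Δ ∪ σ '' cl.lhs) ψ := by
        intro ψ hψ
        rcases hψ with hψ | hψ
        · exact Sup_up (hsup ψ hψ) Set.subset_union_left
        · obtain ⟨p, hpmem, rfl⟩ := hψ
          exact ⟨fun _ => Set.mem_union_right _ ⟨p, hpmem, rfl⟩,
            fun hi => absurd (hp'.2 p) hi⟩
      exact J_to_der_pure hp'.2 (ih cl hcl _ hsup')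
    · refine ⟨fun hpp => absurd hpp hp, fun _ => ?_⟩
      rw [interp_conn]
      apply subset_star
      refine Set.mem_iUnion.mpr ⟨rr, Set.mem_iUnion.mpr ⟨hr, Set.mem_iUnion.mpr ⟨rfl, ?_⟩⟩⟩
      intro cl hcl Ξ' hΞ hargs
      have hsup' : ∀ ψ ∈ Γ ∪ σ '' cl.lhs, Sup G1 S G2 K Ξ' ψ := by
        intro ψ hψ
        rcases hψ with hψ | hψ
        · exact Sup_up (hsup ψ hψ) hΞ
        · obtain ⟨p, hpmem, rfl⟩ := hψ
          exact hargs p hpmem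
      have hj := ih cl hcl Ξ' hsup'
      cases hrh : cl.rhs with
      | none => rw [hrh] at hj; exact hj
      | some q => rw [hrh] at hj; exact hj
  | @left Γ E lr hl σ hhard hsoft ihh ihs =>
    intro Δ hsup
    have hsupΓ : ∀ ψ ∈ Γ, Sup G1 S G2 K Δ ψ := fun ψ hψ => hsup ψ (Set.mem_insert_of_mem _ hψ)
    have hsupc := hsup _ (Set.mem_insert _ _)
    by_cases hp : (Fm.conn lr.conn σ).inK K
    · -- pure principal formula: simulate the left rule syntactically in G1
      have hp' : lr.conn ∈ K ∧ ∀ i, (σ i).inK K := by simpa [Fm.inK] using hp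
      have hlG1 := hnewL lr hl hp'.1
      have hconn : Fm.conn lr.conn σ ∈ Δ := hsupc.1 hp
      have hhard' : ∀ X : Set (Fm L), Δ ⊆ X → ∀ cl ∈ lr.hard,
          Der G1 S (X ∪ σ '' cl.lhs) (cl.rhs.map σ) := by
        intro X hX cl hcl
        have hsup' : ∀ ψ ∈ Γ ∪ σ '' cl.lhs, Sup G1 S G2 K (X ∪ σ '' cl.lhs) ψ := by
          intro ψ hψ
          rcases hψ with hψ | hψ
          · exact Sup_up (hsupΓ ψ hψ) (Set.Subset.trans hX Set.subset_union_left)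
          · obtain ⟨p, hpmem, rfl⟩ := hψ
            exact ⟨fun _ => Set.mem_union_right _ ⟨p, hpmem, rfl⟩,
              fun hi => absurd (hp'.2 p) hi⟩
        exact J_to_der_pure hp'.2 (ihh cl hcl _ hsup')
      have hsoftsup : ∀ (X : Set (Fm L)), Δ ⊆ X → ∀ t ∈ lr.soft,
          ∀ ψ ∈ Γ ∪ σ '' t, Sup G1 S G2 K (X ∪ σ '' t) ψ := by
        intro X hX t ht ψ hψ
        rcases hψ with hψ | hψ
        · exact Sup_up (hsupΓ ψ hψ) (Set.Subset.trans hX Set.subset_union_left)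
        · obtain ⟨p, hpmem, rfl⟩ := hψ
          exact ⟨fun _ => Set.mem_union_right _ ⟨p, hpmem, rfl⟩,
            fun hi => absurd (hp'.2 p) hi⟩
      cases E with
      | none =>
        have hsoft' : ∀ t ∈ lr.soft, Der G1 S (Δ ∪ σ '' t) none := by
          intro t ht
          exact ihs t ht _ (hsoftsup Δ (subset_refl _) t ht)
        have hder := Deriv.left lr hlG1 σ (hhard' Δ (subset_refl _)) hsoft'
        have heq : insert (Fm.conn lr.conn σ) Δ = Δ := Set.insert_eq_self.mpr hconn
        rw [heq] at hder
        exact hder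
      | some ψE =>
        by_cases hpe : ψE.inK K
        · refine J_of_pure hpe ?_
          have hsoft' : ∀ t ∈ lr.soft, Der G1 S (Δ ∪ σ '' t) (some ψE) := by
            intro t ht
            exact (ihs t ht _ (hsoftsup Δ (subset_refl _) t ht)).1 hpe
          have hder := Deriv.left lr hlG1 σ (hhard' Δ (subset_refl _)) hsoft'
          have heq : insert (Fm.conn lr.conn σ) Δ = Δ := Set.insert_eq_self.mpr hconn
          rwa [heq] at hder
        · refine ⟨fun hpp => absurd hpp hpe, fun _ => ?_⟩
          obtain ⟨B, hB⟩ := interp_isStar G1 S G2 K ψE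
          rw [hB]
          intro Θ F orth
          have hsoft' : ∀ t ∈ lr.soft, Der G1 S ((Δ ∪ Θ) ∪ σ '' t) F := by
            intro t ht
            have hj := ihs t ht _ (hsoftsup (Δ ∪ Θ) Set.subset_union_left t ht)
            have hmem := hj.2 hpe
            rw [hB] at hmem
            have h5 := hmem Θ F orth
            exact Der.mono h5 (by intro x hx; simp only [Set.mem_union] at *; tauto)
          have hder := Deriv.left lr hlG1 σ (hhard' (Δ ∪ Θ) Set.subset_union_left) hsoft'
          exact Der.mono hder (by
            intro x hx
            rcases Set.mem_insert_iff.mp hx with rfl | hx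
            · exact Set.mem_union_left _ hconn
            · exact hx)
    · -- impure principal formula: use the phase interpretation and coherence
      have hmem0 : Δ ∈ interp G1 S G2 K (Fm.conn lr.conn σ) := hsupc.2 hp
      rw [interp_conn] at hmem0
      have hstep : ∀ (Ξb : Set (Fm L)), Δ ⊆ Ξb →
          ∀ Δ'' ∈ (⋃ (rr : RightRule L) (_ : rr ∈ G2.rights) (e : rr.conn = lr.conn),
            WsetA G1 S K (fun p => σ (Fin.cast (congrArg L.arity e) p))
              (fun p => interp G1 S G2 K (σ (Fin.cast (congrArg L.arity e) p))) rr.prem),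
          J G1 S G2 K (Δ'' ∪ Ξb) E := by
        intro Ξb hΞb Δ'' hΔ''
        simp only [Set.mem_iUnion] at hΔ''
        obtain ⟨rr, hr, e, hWmem⟩ := hΔ''
        have hW' : Δ'' ∪ Ξb ∈ WsetA G1 S K (fun p => σ (Fin.cast (congrArg L.arity e) p))
            (fun p => interp G1 S G2 K (σ (Fin.cast (congrArg L.arity e) p))) rr.prem := by
          intro cl hcl Ξ' hΞ' hargs
          exact hWmem cl hcl Ξ' (Set.Subset.trans Set.subset_union_left hΞ') hargs
        exact propagate hcoh2 lr hl σ Γ E ihh ihs rr hr e (Δ'' ∪ Ξb) hW'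
          (fun φ hφ => Sup_up (hsupΓ φ hφ) (Set.Subset.trans hΞb Set.subset_union_right))
      cases E with
      | none =>
        have hres := hmem0 Δ none (fun Δ'' hΔ'' => hstep Δ (subset_refl _) Δ'' hΔ'')
        rwa [Set.union_self] at hres
      | some ψE =>
        by_cases hpe : ψE.inK K
        · refine J_of_pure hpe ?_
          have hres := hmem0 Δ (some ψE)
            (fun Δ'' hΔ'' => (hstep Δ (subset_refl _) Δ'' hΔ'').1 hpe)
          rwa [Set.union_self] at hres
        · refine ⟨fun hpp => absurd hpp hpe, fun _ => ?_⟩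
          obtain ⟨B, hB⟩ := interp_isStar G1 S G2 K ψE
          rw [hB]
          intro Θ F orth
          have horth : ∀ Δ'' ∈ (⋃ (rr : RightRule L) (_ : rr ∈ G2.rights) (e : rr.conn = lr.conn),
              WsetA G1 S K (fun p => σ (Fin.cast (congrArg L.arity e) p))
                (fun p => interp G1 S G2 K (σ (Fin.cast (congrArg L.arity e) p))) rr.prem),
              Der G1 S (Δ'' ∪ (Δ ∪ Θ)) F := by
            intro Δ'' hΔ''
            have hj := hstep (Δ ∪ Θ) Set.subset_union_left Δ'' hΔ''
            have hmem := hj.2 hpe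
            rw [hB] at hmem
            have h5 := hmem Θ F orth
            exact Der.mono h5 (by intro x hx; simp only [Set.mem_union] at *; tauto)
          have hres := hmem0 (Δ ∪ Θ) F horth
          exact Der.mono hres (by intro x hx; simp only [Set.mem_union] at *; tauto)

/-- The easy direction: derivability is monotone in the rule sets. -/
theorem mono_sys {C : Set (Fm L)} (hsubR : G1.rights ⊆ G2.rights) (hsubL : G1.lefts ⊆ G2.lefts)
    {t : Sequent L} (h : Deriv G1 S C t) : Deriv G2 S C t := by
  induction h with
  | hyp hmem => exact Deriv.hyp hmem
  | ax φ => exact Deriv.ax φ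
  | weakL h hsub ih => exact Deriv.weakL ih hsub
  | weakR ψ h ih => exact Deriv.weakR ψ ih
  | cut hφ h1 h2 ih1 ih2 => exact Deriv.cut hφ ih1 ih2
  | right rr hr σ hprem ih => exact Deriv.right rr (hsubR hr) σ ih
  | left lr hl σ hhard hsoft ihh ihs => exact Deriv.left lr (hsubL hl) σ ihh ihs

end Main

end Lemmas

end ConsAux

/-- Conservativity: if the coherent canonical system G₂ extends
the coherent canonical system G₁ (whose connectives all lie in K) only by rules
for connectives outside K, then for sequents in the K-sublanguage, derivability
in G₁ and in G₂ coincide. -/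
theorem conservativity {L : Lang} (K : Set L.Conn) (G1 G2 : CanSys L)
    (hcoh1 : Coherent G1) (hcoh2 : Coherent G2)
    (hsubR : G1.rights ⊆ G2.rights) (hsubL : G1.lefts ⊆ G2.lefts)
    (hK1R : ∀ rr ∈ G1.rights, rr.conn ∈ K)
    (hK1L : ∀ lr ∈ G1.lefts, lr.conn ∈ K)
    (hnewR : ∀ rr ∈ G2.rights, rr.conn ∈ K → rr ∈ G1.rights)
    (hnewL : ∀ lr ∈ G2.lefts, lr.conn ∈ K → lr ∈ G1.lefts)
    (S : Set (Sequent L)) (s : Sequent L)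
    (hS : ∀ t ∈ S, t.inK K) (hs : s.inK K) :
    Deriv G1 S Set.univ s ↔ Deriv G2 S Set.univ s := by
  constructor
  · exact fun h => ConsAux.mono_sys hsubR hsubL h
  · intro h
    have ht := ConsAux.main_sound (K := K) hcoh2 hnewR hnewL hS h
    obtain ⟨Sl, Sr⟩ := s
    have hj := ht Sl (fun φ hφ => ⟨fun _ => hφ, fun hi => absurd (hs.1 φ hφ) hi⟩)
    cases Sr with
    | none => exact hj
    | some φ => exact hj.1 (hs.2 φ rfl)
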